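/- Let k be a field, q ∈ k^× with q ≠ 1, and let B = A_{q_1} ⊗ ⋯ ⊗ A_{q_m} be a tensor product of quantum Weyl algebras with all q_i ≠ 1. For every k-algebra automorphism g of B that is affine (g preserves the span Y ⊕ k where Y = span{x_i, y_i}), one has g(Y) = Y; that is, the constant terms of g(x_i) and g(y_i) vanish for all i. -/

import Mathlib

noncomputable section

/-- Defining relations of `B = A_{q_1} ⊗ ⋯ ⊗ A_{q_m}`: the generator `(i, false)` is
`x_i`, the generator `(i, true)` is `y_i`; `y_i x_i = q_i x_i y_i + 1`, and generators
with distinct indices commute. -/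
def tWeylRel (k : Type*) [CommRing k] (m : ℕ) (q : Fin m → k) :
    FreeAlgebra k (Fin m × Bool) → FreeAlgebra k (Fin m × Bool) → Prop := fun a b =>
  (∃ i : Fin m, a = FreeAlgebra.ι k (i, true) * FreeAlgebra.ι k (i, false) ∧
      b = algebraMap k _ (q i) *
          (FreeAlgebra.ι k (i, false) * FreeAlgebra.ι k (i, true)) + 1) ∨
  (∃ u v : Fin m × Bool, u.1 ≠ v.1 ∧ a = FreeAlgebra.ι k u * FreeAlgebra.ι k v ∧
      b = FreeAlgebra.ι k v * FreeAlgebra.ι k u)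

/-- The tensor product `A_{q_1} ⊗ ⋯ ⊗ A_{q_m}` of quantum Weyl algebras, presented by
generators and relations. -/
abbrev TWeyl (k : Type*) [CommRing k] (m : ℕ) (q : Fin m → k) :=
  RingQuot (tWeylRel k m q)

/-- The generator `x_i` of `A_{q_1} ⊗ ⋯ ⊗ A_{q_m}`. -/
def TWeyl.x (k : Type*) [CommRing k] (m : ℕ) (q : Fin m → k) (i : Fin m) : TWeyl k m q :=
  RingQuot.mkAlgHom k (tWeylRel k m q) (FreeAlgebra.ι k (i, false))

/-- The generator `y_i` of `A_{q_1} ⊗ ⋯ ⊗ A_{q_m}`. -/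
def TWeyl.y (k : Type*) [CommRing k] (m : ℕ) (q : Fin m → k) (i : Fin m) : TWeyl k m q :=
  RingQuot.mkAlgHom k (tWeylRel k m q) (FreeAlgebra.ι k (i, true))

namespace TWeylAux

open AddMonoidAlgebra

variable (k : Type*) [Field k] (m : ℕ) (q : Fin m → k)

/-- The exponent assigned to a generator: `+e_i` for `x_i`, `-e_i` for `y_i`. -/
def wdeg {m : ℕ} (u : Fin m × Bool) : Fin m →₀ ℤ :=
  if u.2 then -(Finsupp.single u.1 1) else Finsupp.single u.1 1

/-- The scalar assigned to a generator: `1` for `x_i`, `(1 - q_i)⁻¹` for `y_i`. -/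
def cc {k : Type*} [Field k] {m : ℕ} (q : Fin m → k) (u : Fin m × Bool) : k :=
  if u.2 then (1 - q u.1)⁻¹ else 1

/-- Total degree of an exponent vector. -/
def Sdeg (m : ℕ) : (Fin m →₀ ℤ) →+ ℤ :=
  Finsupp.liftAddHom fun _ => AddMonoidHom.id ℤ

lemma Sdeg_single {m : ℕ} (i : Fin m) (n : ℤ) : Sdeg m (Finsupp.single i n) = n := by
  rw [Sdeg, Finsupp.liftAddHom_apply_single]; rfl

lemma Sdeg_wdeg {m : ℕ} (u : Fin m × Bool) :
    Sdeg m (wdeg u) = if u.2 then (-1 : ℤ) else 1 := by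
  rcases u with ⟨i, b⟩
  cases b
  · show Sdeg m (Finsupp.single i 1) = 1
    exact Sdeg_single i 1
  · show Sdeg m (-(Finsupp.single i 1)) = -1
    rw [map_neg, Sdeg_single]

lemma cc_ne_zero {k : Type*} [Field k] {m : ℕ} {q : Fin m → k} (hq : ∀ i, q i ≠ 1)
    (u : Fin m × Bool) : cc q u ≠ 0 := by
  rcases u with ⟨i, b⟩
  cases b <;> simp [cc]
  exact sub_ne_zero.mpr (Ne.symm (hq i))

lemma wdeg_injective {m : ℕ} : Function.Injective (wdeg (m := m)) := by
  rintro ⟨i, b⟩ ⟨j, c⟩ h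
  have hS := congrArg (Sdeg m) h
  rw [Sdeg_wdeg, Sdeg_wdeg] at hS
  cases b <;> cases c
  · have h' : Finsupp.single i (1 : ℤ) = Finsupp.single j 1 := h
    obtain rfl := (Finsupp.single_left_inj (one_ne_zero (α := ℤ))).mp h'
    rfl
  · simp at hS
  · simp at hS
  · have h' : -Finsupp.single i (1 : ℤ) = -Finsupp.single j 1 := h
    obtain rfl := (Finsupp.single_left_inj (one_ne_zero (α := ℤ))).mp (neg_inj.mp h')
    rfl

lemma wdeg_ne_zero {m : ℕ} (u : Fin m × Bool) : wdeg u ≠ 0 := by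
  intro h
  have hS := congrArg (Sdeg m) h
  rw [Sdeg_wdeg, map_zero] at hS
  rcases u with ⟨i, b⟩ <;> cases b <;> simp at hS

lemma wdeg_add_ne {m : ℕ} (u v t : Fin m × Bool) : wdeg u + wdeg v ≠ wdeg t := by
  intro h
  have hS := congrArg (Sdeg m) h
  rw [map_add, Sdeg_wdeg, Sdeg_wdeg, Sdeg_wdeg] at hS
  rcases u with ⟨i, b⟩; rcases v with ⟨j, c⟩; rcases t with ⟨l, d⟩
  cases b <;> cases c <;> cases d <;> simp at hS <;> omega

/-- The generators of `TWeyl` as a single family. -/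
def fgen (u : Fin m × Bool) : TWeyl k m q :=
  RingQuot.mkAlgHom k (tWeylRel k m q) (FreeAlgebra.ι k u)

lemma fgen_x (i : Fin m) : fgen k m q (i, false) = TWeyl.x k m q i := rfl

lemma fgen_y (i : Fin m) : fgen k m q (i, true) = TWeyl.y k m q i := rfl

lemma range_union_eq :
    Set.range (TWeyl.x k m q) ∪ Set.range (TWeyl.y k m q) = Set.range (fgen k m q) := by
  ext t
  constructor
  · rintro (⟨i, rfl⟩ | ⟨i, rfl⟩)
    · exact ⟨(i, false), rfl⟩
    · exact ⟨(i, true), rfl⟩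
  · rintro ⟨⟨i, b⟩, rfl⟩
    cases b
    · exact Or.inl ⟨i, rfl⟩
    · exact Or.inr ⟨i, rfl⟩

variable {q} in
/-- The "commutative character" `χ : TWeyl → k[Laurent]` sending `x_i` to `T_i` and
`y_i` to `(1-q_i)⁻¹ T_i⁻¹`. -/
def chi (hq : ∀ i, q i ≠ 1) :
    TWeyl k m q →ₐ[k] AddMonoidAlgebra k (Fin m →₀ ℤ) :=
  RingQuot.liftAlgHom k
    ⟨FreeAlgebra.lift k fun u => AddMonoidAlgebra.single (wdeg u) (cc q u), by
      rintro a b (⟨i, rfl, rfl⟩ | ⟨u, v, huv, rfl, rfl⟩)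
      · simp only [map_mul, map_add, map_one, FreeAlgebra.lift_ι_apply, AlgHom.commutes]
        rw [AddMonoidAlgebra.single_mul_single, AddMonoidAlgebra.single_mul_single]
        have h1 : wdeg (i, true) + wdeg (i, false) = 0 := by simp [wdeg]
        have h2 : wdeg (i, false) + wdeg (i, true) = 0 := by simp [wdeg]
        rw [h1, h2]
        have halg : algebraMap k (AddMonoidAlgebra k (Fin m →₀ ℤ)) (q i)
            = AddMonoidAlgebra.single 0 (q i) := by
          simp [AddMonoidAlgebra.coe_algebraMap]
        rw [halg, AddMonoidAlgebra.single_mul_single, AddMonoidAlgebra.one_def, add_zero,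
          ← AddMonoidAlgebra.single_add]
        congr 1
        have hne : (1 : k) - q i ≠ 0 := sub_ne_zero.mpr (Ne.symm (hq i))
        rw [show cc q (i, true) = (1 - q i)⁻¹ from rfl, show cc q (i, false) = 1 from rfl]
        linear_combination inv_mul_cancel₀ hne
      · simp only [map_mul, FreeAlgebra.lift_ι_apply]
        exact mul_comm _ _⟩

variable {q} in
lemma chi_fgen (hq : ∀ i, q i ≠ 1) (u : Fin m × Bool) :
    chi k m hq (fgen k m q u) = AddMonoidAlgebra.single (wdeg u) (cc q u) := by
  rw [fgen, chi, RingQuot.liftAlgHom_mkAlgHom_apply, FreeAlgebra.lift_ι_apply]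

/-- Coefficient extraction as a linear functional on the Laurent algebra. -/
def coeffL (w : Fin m →₀ ℤ) : AddMonoidAlgebra k (Fin m →₀ ℤ) →ₗ[k] k where
  toFun f := f.coeff w
  map_add' f g := Finsupp.add_apply f.coeff g.coeff w
  map_smul' c f := Finsupp.smul_apply c f.coeff w

lemma coeffL_single (w w' : Fin m →₀ ℤ) (c : k) :
    coeffL k m w (AddMonoidAlgebra.single w' c) = if w' = w then c else 0 :=
  Finsupp.single_apply

variable {q} in
/-- The coefficient functional at the generator `u` of degree `±1`. -/
def psi (hq : ∀ i, q i ≠ 1) (u : Fin m × Bool) : TWeyl k m q →ₗ[k] k :=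
  (cc q u)⁻¹ • ((coeffL k m (wdeg u)).comp (chi k m hq).toLinearMap)

variable {q} in
lemma psi_fgen (hq : ∀ i, q i ≠ 1) (u v : Fin m × Bool) :
    psi k m hq u (fgen k m q v) = if v = u then 1 else 0 := by
  rw [psi]
  simp only [LinearMap.smul_apply, LinearMap.coe_comp, Function.comp_apply,
    AlgHom.toLinearMap_apply, chi_fgen, coeffL_single, smul_eq_mul]
  by_cases h : v = u
  · subst h
    simp [inv_mul_cancel₀ (cc_ne_zero hq v)]
  · have : wdeg v ≠ wdeg u := fun hw => h (wdeg_injective hw)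
    simp [h, this]

variable {q} in
lemma psi_x (hq : ∀ i, q i ≠ 1) (u : Fin m × Bool) (i : Fin m) :
    psi k m hq u (TWeyl.x k m q i) = if (i, false) = u then 1 else 0 := by
  rw [← fgen_x]; exact psi_fgen k m hq u (i, false)

variable {q} in
lemma psi_y (hq : ∀ i, q i ≠ 1) (u : Fin m × Bool) (i : Fin m) :
    psi k m hq u (TWeyl.y k m q i) = if (i, true) = u then 1 else 0 := by
  rw [← fgen_y]; exact psi_fgen k m hq u (i, true)

variable {q} in
lemma psi_one (hq : ∀ i, q i ≠ 1) (u : Fin m × Bool) :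
    psi k m hq u (1 : TWeyl k m q) = 0 := by
  rw [psi]
  simp only [LinearMap.smul_apply, LinearMap.coe_comp, Function.comp_apply,
    AlgHom.toLinearMap_apply, map_one, smul_eq_mul]
  rw [AddMonoidAlgebra.one_def, coeffL_single]
  simp [(wdeg_ne_zero u).symm]

variable {q} in
lemma psi_mul (hq : ∀ i, q i ≠ 1) (u : Fin m × Bool) :
    ∀ a ∈ Submodule.span k (Set.range (fgen k m q)),
      ∀ b ∈ Submodule.span k (Set.range (fgen k m q)),
        psi k m hq u (a * b) = 0 := by
  intro a ha
  induction ha using Submodule.span_induction with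
  | mem z hz =>
    intro b hb
    induction hb using Submodule.span_induction with
    | mem z' hz' =>
      obtain ⟨v, rfl⟩ := hz
      obtain ⟨v', rfl⟩ := hz'
      rw [psi]
      simp only [LinearMap.smul_apply, LinearMap.coe_comp, Function.comp_apply,
        AlgHom.toLinearMap_apply, map_mul, chi_fgen, smul_eq_mul,
        AddMonoidAlgebra.single_mul_single, coeffL_single]
      rw [if_neg (wdeg_add_ne v v' u)]
      simp
    | zero => simp
    | add x y hx hy ihx ihy => rw [mul_add, map_add, ihx, ihy, add_zero]
    | smul c x hx ih => rw [mul_smul_comm, map_smul, ih, smul_zero]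
  | zero => intro b hb; simp
  | add x y hx hy ihx ihy => intro b hb; rw [add_mul, map_add, ihx b hb, ihy b hb, add_zero]
  | smul c x hx ih => intro b hb; rw [smul_mul_assoc, map_smul, ih b hb, smul_zero]

variable {q} in
lemma eq_zero_of_psi (hq : ∀ i, q i ≠ 1) {v : TWeyl k m q}
    (hv : v ∈ Submodule.span k (Set.range (fgen k m q)))
    (h : ∀ u, psi k m hq u v = 0) : v = 0 := by
  obtain ⟨c, rfl⟩ := Finsupp.mem_span_range_iff_exists_finsupp.mp hv
  have hc : ∀ u, c u = 0 := by
    intro u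
    have h' := h u
    rw [map_finsuppSum] at h'
    simp only [map_smul, psi_fgen, smul_eq_mul, mul_ite, mul_one, mul_zero] at h'
    rwa [Finsupp.sum_ite_self_eq' c u] at h'
  have : c = 0 := Finsupp.ext hc
  simp [this]

end TWeylAux

/-- Let `B = A_{q_1} ⊗ ⋯ ⊗ A_{q_m}` with all `q_i ≠ 1`.  For every
affine `k`-algebra automorphism `g` of `B` (one mapping each generator into
`Y ⊕ k` where `Y = span {x_i, y_i}`), one has `g(Y) = Y`: the images of the generators
lie in `Y`, i.e. the constant terms of `g x_i` and `g y_i` vanish. -/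
theorem affine_automorphism_preserves_Y
    (k : Type*) [Field k] (m : ℕ) (q : Fin m → k) (hq : ∀ i, q i ≠ 1)
    (g : TWeyl k m q ≃ₐ[k] TWeyl k m q)
    (haff : ∀ i : Fin m,
      g (TWeyl.x k m q i) ∈ Submodule.span k
        (insert (1 : TWeyl k m q) (Set.range (TWeyl.x k m q) ∪ Set.range (TWeyl.y k m q))) ∧
      g (TWeyl.y k m q i) ∈ Submodule.span k
        (insert (1 : TWeyl k m q) (Set.range (TWeyl.x k m q) ∪ Set.range (TWeyl.y k m q)))) :
    ∀ i : Fin m,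
      g (TWeyl.x k m q i) ∈ Submodule.span k
        (Set.range (TWeyl.x k m q) ∪ Set.range (TWeyl.y k m q)) ∧
      g (TWeyl.y k m q i) ∈ Submodule.span k
        (Set.range (TWeyl.x k m q) ∪ Set.range (TWeyl.y k m q)) := by
  intro i
  obtain ⟨hx, hy⟩ := haff i
  rw [Submodule.mem_span_insert] at hx hy
  obtain ⟨α, a, haY, hgx⟩ := hx
  obtain ⟨β, b, hbY, hgy⟩ := hy
  rw [TWeylAux.range_union_eq] at haY hbY ⊢
  -- the defining relation in `TWeyl`
  have hrel : TWeyl.y k m q i * TWeyl.x k m q i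
      = algebraMap k _ (q i) * (TWeyl.x k m q i * TWeyl.y k m q i) + 1 := by
    have h := RingQuot.mkAlgHom_rel k (s := tWeylRel k m q)
      (Or.inl ⟨i, rfl, rfl⟩)
    simpa only [TWeyl.x, TWeyl.y, map_mul, map_add, map_one, AlgHom.commutes] using h
  -- the relation, transported through `g`
  have hgrel : g (TWeyl.y k m q i) * g (TWeyl.x k m q i)
      = algebraMap k _ (q i) * (g (TWeyl.x k m q i) * g (TWeyl.y k m q i)) + 1 := by
    have h := congrArg g hrel
    simpa only [map_mul, map_add, map_one, AlgEquiv.commutes] using h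
  -- apply the coefficient functionals
  have key : ∀ u : Fin m × Bool, TWeylAux.psi k m hq u (β • a + α • b) = 0 := by
    intro u
    have hba := TWeylAux.psi_mul k m hq u b hbY a haY
    have hab := TWeylAux.psi_mul k m hq u a haY b hbY
    have hmap : TWeylAux.psi k m hq u (algebraMap k (TWeyl k m q) (q i)) = 0 := by
      rw [Algebra.algebraMap_eq_smul_one, map_smul, TWeylAux.psi_one, smul_zero]
    have h1 := congrArg (TWeylAux.psi k m hq u) hgrel
    rw [hgx, hgy] at h1
    simp only [mul_add, add_mul, smul_mul_assoc, mul_smul_comm, one_mul, mul_one,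
      smul_smul, ← Algebra.smul_def, map_add, map_smul, smul_eq_mul,
      TWeylAux.psi_one, hba, hab, hmap, mul_zero, add_zero, zero_add] at h1
    have h2 : (1 - q i) * (β * TWeylAux.psi k m hq u a + α * TWeylAux.psi k m hq u b) = 0 := by
      linear_combination h1
    have h3 : β * TWeylAux.psi k m hq u a + α * TWeylAux.psi k m hq u b = 0 :=
      (mul_eq_zero.mp h2).resolve_left (sub_ne_zero.mpr (Ne.symm (hq i)))
    rw [map_add, map_smul, map_smul, smul_eq_mul, smul_eq_mul]
    exact h3
  have hv : β • a + α • b = 0 :=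
    TWeylAux.eq_zero_of_psi k m hq
      (Submodule.add_mem _ (Submodule.smul_mem _ _ haY) (Submodule.smul_mem _ _ hbY)) key
  -- `g (α y_i + β x_i)` is a scalar
  have hg2 : g (α • TWeyl.y k m q i + β • TWeyl.x k m q i) = ((2 : k) * (α * β)) • 1 := by
    rw [map_add, map_smul, map_smul, hgx, hgy]
    have expand : α • (β • (1 : TWeyl k m q) + b) + β • (α • 1 + a)
        = ((2 : k) * (α * β)) • 1 + (β • a + α • b) := by
      module
    rw [expand, hv, add_zero]
  have hfix : g (((2 : k) * (α * β)) • (1 : TWeyl k m q)) = ((2 : k) * (α * β)) • 1 := by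
    rw [map_smul, map_one]
  have heq : α • TWeyl.y k m q i + β • TWeyl.x k m q i
      = ((2 : k) * (α * β)) • (1 : TWeyl k m q) :=
    g.injective (hg2.trans hfix.symm)
  have hα : α = 0 := by
    have h' := congrArg (TWeylAux.psi k m hq (i, true)) heq
    simpa [map_add, map_smul, TWeylAux.psi_x, TWeylAux.psi_y, TWeylAux.psi_one] using h'
  have hβ : β = 0 := by
    have h' := congrArg (TWeylAux.psi k m hq (i, false)) heq
    simpa [map_add, map_smul, TWeylAux.psi_x, TWeylAux.psi_y, TWeylAux.psi_one] using h'
  constructor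
  · rw [hgx, hα]; simpa using haY
  · rw [hgy, hβ]; simpa using hbY
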